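/- In the voting model with n voters and majority threshold t = ⌊n/2⌋ + 1, consider a context u in which exactly m voters vote 1, where t ≤ m ≤ n (so O = 1 in the unique solution, i.e., Mr. B wins). Then for every voter i with X_i = 1 in (M,u), X_i = 1 is a cause of O = 1 in (M,u) and dr((M,u), X_i = 1, O = 1) = 1/(m − t + 1); and for every voter i with X_i = 0 in (M,u), X_i = 0 is not a cause of O = 1, so dr((M,u), X_i = 0, O = 1) = 0. (For example, for n = 11 this gives degree of responsibility 1/6 for each voter when the vote is 11–0, and 1 for each of the six B-voters when the vote is 6–5.) -/

import Mathlib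

open Classical

/-- A causal model over exogenous variables `U` and endogenous variables `V`,
with integer-valued variables.  `Rexo Y` / `R X` are the (intended) ranges of
the variables, and `F X` is the structural equation for the endogenous
variable `X`, giving its value as a function of the values of all other
variables. -/
structure CausalModel (U V : Type) where
  Rexo : U → Set ℤ
  R : V → Set ℤ
  F : V → (U → ℤ) → (V → ℤ) → ℤ

namespace CausalModel

variable {U V : Type}

/-- A causal model is recursive if the variables can be ordered so that each
structural equation depends only on the values of strictly earlier endogenous
variables (equivalently, the dependency graph is acyclic). -/
def Recursive (M : CausalModel U V) : Prop :=
  ∃ ord : V → ℕ, ∀ (X : V) (u : U → ℤ) (g g' : V → ℤ),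
    (∀ Y, ord Y < ord X → g Y = g' Y) → M.F X u g = M.F X u g'

/-- `s` simultaneously satisfies all the structural equations in context `u`. -/
def IsSolution (M : CausalModel U V) (u : U → ℤ) (s : V → ℤ) : Prop :=
  ∀ X, s X = M.F X u s

/-- The (unique, for recursive models) solution of the equations in context `u`. -/
noncomputable def solution (M : CausalModel U V) (u : U → ℤ) : V → ℤ :=
  Classical.epsilon fun s => M.IsSolution u s

/-- The model `M_{A ← y}` obtained by replacing the equations of the variables
in `A` by the constant values given by `y`. -/
noncomputable def intervene (M : CausalModel U V) (A : Set V) (y : V → ℤ) :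
    CausalModel U V where
  Rexo := M.Rexo
  R := M.R
  F := fun X u g => if X ∈ A then y X else M.F X u g

end CausalModel

/-- Boolean combinations of primitive events `X = x`. -/
inductive CausalFormula (V : Type) where
  | tru : CausalFormula V
  | eq : V → ℤ → CausalFormula V
  | not : CausalFormula V → CausalFormula V
  | and : CausalFormula V → CausalFormula V → CausalFormula V
  | or : CausalFormula V → CausalFormula V → CausalFormula V
  | iff : CausalFormula V → CausalFormula V → CausalFormula V

/-- Truth of a causal formula under an assignment to the endogenous variables. -/
def CausalFormula.holds {V : Type} (s : V → ℤ) : CausalFormula V → Prop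
  | tru => True
  | eq X x => s X = x
  | not φ => ¬ φ.holds s
  | and φ χ => φ.holds s ∧ χ.holds s
  | or φ χ => φ.holds s ∨ χ.holds s
  | iff φ χ => φ.holds s ↔ χ.holds s

/-- `(M,u) ⊨ [A ← y] φ` : `φ` holds in the unique solution of `M_{A ← y}` in
context `u`. -/
def sat {U V : Type} (M : CausalModel U V) (u : U → ℤ) (A : Set V) (y : V → ℤ)
    (φ : CausalFormula V) : Prop :=
  φ.holds ((M.intervene A y).solution u)

/-- Condition AC2 of the Halpern–Pearl definition of causality, for the single
conjunct `X = x`, witnessed by the partition `(Wᶜ, W)` (so `Z = Wᶜ ∋ X`) and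
the setting `(x', w')` of `(X, W)`. -/
def AC2 {U V : Type} (M : CausalModel U V) (u : U → ℤ) (X : V) (x : ℤ)
    (φ : CausalFormula V) (W : Set V) (x' : ℤ) (w' : V → ℤ) : Prop :=
  X ∉ W ∧ x' ∈ M.R X ∧ (∀ Y ∈ W, w' Y ∈ M.R Y) ∧
  -- AC2(a): (M,u) ⊨ [X ← x', W ← w'] ¬φ
  ¬ sat M u (insert X W) (fun Y => if Y = X then x' else w' Y) φ ∧
  -- AC2(b): (M,u) ⊨ [X ← x, W ← w', Z' ← z*] φ for all subsets Z' of Z = Wᶜ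
  ∀ Z' : Set V, Z' ⊆ Wᶜ →
    sat M u (insert X (W ∪ Z'))
      (fun Y => if Y = X then x else if Y ∈ W then w' Y else M.solution u Y) φ

/-- `X = x` is a cause of `φ` in `(M,u)`: AC1 together with AC2 (AC3 is
automatic for single conjuncts). -/
def IsCause {U V : Type} (M : CausalModel U V) (u : U → ℤ) (X : V) (x : ℤ)
    (φ : CausalFormula V) : Prop :=
  (M.solution u X = x ∧ φ.holds (M.solution u)) ∧
  ∃ W x' w', AC2 M u X x φ W x' w'

/-- The degree of responsibility of `X = x` for `φ` in `(M,u)` : `0` if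
`X = x` is not a cause of `φ`, and otherwise `1/(k+1)` where `k` is the
minimal, over all AC2 witnesses, number of variables of `W` whose value in
`w'` differs from their value in the unique solution of `(M,u)`. -/
noncomputable def dr {U V : Type} (M : CausalModel U V) (u : U → ℤ) (X : V)
    (x : ℤ) (φ : CausalFormula V) : ℚ :=
  if IsCause M u X x φ then
    1 / ((sInf {k : ℕ | ∃ W x' w', AC2 M u X x φ W x' w' ∧
        {Y | Y ∈ W ∧ w' Y ≠ M.solution u Y}.ncard = k} : ℕ) + 1 : ℚ)
  else 0

/-- The voting model with `n` voters and majority threshold `t`: the vote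
`X_i` of voter `i` copies the value determined by the exogenous context, and
the outcome `O` is `1` iff at least `t` voters vote `1`. -/
def votingModel (n t : ℕ) : CausalModel (Fin n) (Fin n ⊕ Unit) where
  Rexo := fun _ => {0, 1}
  R := fun _ => {0, 1}
  F := fun X u g =>
    match X with
    | Sum.inl i => u i
    | Sum.inr _ =>
        if t ≤ (Finset.univ.filter fun i : Fin n => g (Sum.inl i) = 1).card
        then 1 else 0


/-! ### Auxiliary machinery -/

lemma solution_eq {U V : Type} (M : CausalModel U V) (u : U → ℤ) (s : V → ℤ)
    (hs : M.IsSolution u s) (huniq : ∀ s', M.IsSolution u s' → s' = s) :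
    M.solution u = s :=
  huniq _ (Classical.epsilon_spec (⟨s, hs⟩ : ∃ s, M.IsSolution u s))

noncomputable def iSol (n t : ℕ) (u : Fin n → ℤ) (A : Set (Fin n ⊕ Unit))
    (y : Fin n ⊕ Unit → ℤ) : Fin n ⊕ Unit → ℤ
  | Sum.inl i => if Sum.inl i ∈ A then y (Sum.inl i) else u i
  | Sum.inr _ => if Sum.inr () ∈ A then y (Sum.inr ()) else
      if t ≤ (Finset.univ.filter fun i : Fin n =>
          (if Sum.inl i ∈ A then y (Sum.inl i) else u i) = 1).card then 1 else 0

lemma intervene_solution (n t : ℕ) (u : Fin n → ℤ) (A : Set (Fin n ⊕ Unit))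
    (y : Fin n ⊕ Unit → ℤ) :
    ((votingModel n t).intervene A y).solution u = iSol n t u A y := by
  apply solution_eq
  · intro X
    cases X with
    | inl i => simp [CausalModel.intervene, votingModel, iSol]
    | inr q => cases q; simp [CausalModel.intervene, votingModel, iSol]; rfl
  · intro s hs
    have hv : ∀ i, s (Sum.inl i) = (if Sum.inl i ∈ A then y (Sum.inl i) else u i) := by
      intro i
      have := hs (Sum.inl i)
      simpa [CausalModel.intervene, votingModel] using this
    funext X
    cases X with
    | inl i => simpa [iSol] using hv i
    | inr q =>
      cases q
      have := hs (Sum.inr ())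
      simp only [CausalModel.intervene, votingModel] at this
      simp only [iSol]
      rw [this]
      have hfil : (Finset.filter (fun i => s (Sum.inl i) = 1) Finset.univ)
          = Finset.filter (fun i : Fin n =>
              (if Sum.inl i ∈ A then y (Sum.inl i) else u i) = 1) Finset.univ := by
        apply Finset.filter_congr
        intro j _
        rw [hv j]
      rw [hfil]

lemma votingModel_eq (n t : ℕ) :
    (votingModel n t).intervene ∅ 0 = votingModel n t := by
  unfold CausalModel.intervene
  congr 1
  · funext X u g
    simp only [Set.mem_empty_iff_false, if_false]
    rfl

lemma votingModel_solution (n t : ℕ) (u : Fin n → ℤ) :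
    (votingModel n t).solution u = iSol n t u ∅ 0 := by
  rw [← votingModel_eq n t, intervene_solution]

lemma sol_inl (n t : ℕ) (u : Fin n → ℤ) (j : Fin n) :
    (votingModel n t).solution u (Sum.inl j) = u j := by
  rw [votingModel_solution]; simp [iSol]

lemma sol_O {n t m : ℕ} (u : Fin n → ℤ) (htm : t ≤ m)
    (hcount : (Finset.univ.filter fun i => u i = 1).card = m) :
    (votingModel n t).solution u (Sum.inr ()) = 1 := by
  rw [votingModel_solution]
  simp only [iSol, Set.mem_empty_iff_false, if_false]
  rw [hcount, if_pos htm]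

/-- Satisfaction of `O = 1` when `O` is not intervened on. -/
lemma sat_O_notmem (n t : ℕ) (u : Fin n → ℤ) (A : Set (Fin n ⊕ Unit))
    (y : Fin n ⊕ Unit → ℤ) (hO : Sum.inr () ∉ A) :
    sat (votingModel n t) u A y (CausalFormula.eq (Sum.inr ()) 1) ↔
      t ≤ (Finset.univ.filter fun j : Fin n =>
        (if Sum.inl j ∈ A then y (Sum.inl j) else u j) = 1).card := by
  unfold sat
  rw [intervene_solution]
  simp only [CausalFormula.holds, iSol, if_neg hO]
  constructor
  · intro h
    by_contra hc
    rw [if_neg hc] at h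
    exact absurd h (by norm_num)
  · intro h
    rw [if_pos h]

/-- Satisfaction of `O = 1` when `O` is intervened on. -/
lemma sat_O_mem (n t : ℕ) (u : Fin n → ℤ) (A : Set (Fin n ⊕ Unit))
    (y : Fin n ⊕ Unit → ℤ) (hO : Sum.inr () ∈ A) :
    sat (votingModel n t) u A y (CausalFormula.eq (Sum.inr ()) 1) ↔
      y (Sum.inr ()) = 1 := by
  unfold sat
  rw [intervene_solution]
  simp only [CausalFormula.holds, iSol, if_pos hO]

/-- The effective vote vector after an AC2-style intervention. -/
noncomputable def vA (n : ℕ) (u : Fin n → ℤ) (i : Fin n) (W : Set (Fin n ⊕ Unit))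
    (x' : ℤ) (w' : Fin n ⊕ Unit → ℤ) (j : Fin n) : ℤ :=
  if j = i then x' else if Sum.inl j ∈ W then w' (Sum.inl j) else u j

lemma satA_iff (n t : ℕ) (u : Fin n → ℤ) (i : Fin n) (W : Set (Fin n ⊕ Unit))
    (x' : ℤ) (w' : Fin n ⊕ Unit → ℤ) (hOW : Sum.inr () ∉ W) :
    sat (votingModel n t) u (insert (Sum.inl i) W)
      (fun Y => @ite _ (Y = Sum.inl i) (Classical.propDecidable _) x' (w' Y))
      (CausalFormula.eq (Sum.inr ()) 1) ↔
    t ≤ (Finset.univ.filter fun j => vA n u i W x' w' j = 1).card := by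
  rw [sat_O_notmem n t u _ _ (by simp [hOW])]
  refine Iff.of_eq (congrArg (t ≤ ·) (congrArg Finset.card
    (Finset.filter_congr fun j _ => ?_)))
  by_cases h1 : j = i
  · subst h1
    rw [if_pos (Set.mem_insert _ _)]
    simp [vA]
  · by_cases h2 : Sum.inl j ∈ W
    · rw [if_pos (Set.mem_insert_of_mem _ h2)]
      simp [vA, h1, h2]
    · rw [if_neg (by simp [h1, h2, Set.mem_insert_iff])]
      simp [vA, h1, h2]

lemma satB_iff (n t : ℕ) (u : Fin n → ℤ) (i : Fin n) (W : Set (Fin n ⊕ Unit))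
    (x : ℤ) (w' : Fin n ⊕ Unit → ℤ) (Z' : Set (Fin n ⊕ Unit))
    (hOW : Sum.inr () ∉ W) (hOZ : Sum.inr () ∉ Z') :
    sat (votingModel n t) u (insert (Sum.inl i) (W ∪ Z'))
      (fun Y => @ite _ (Y = Sum.inl i) (Classical.propDecidable _) x
        (@ite _ (Y ∈ W) (Classical.propDecidable _) (w' Y)
          ((votingModel n t).solution u Y)))
      (CausalFormula.eq (Sum.inr ()) 1) ↔
    t ≤ (Finset.univ.filter fun j => vA n u i W x w' j = 1).card := by
  rw [sat_O_notmem n t u _ _ (by simp [hOW, hOZ])]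
  refine Iff.of_eq (congrArg (t ≤ ·) (congrArg Finset.card
    (Finset.filter_congr fun j _ => ?_)))
  by_cases h1 : j = i
  · subst h1
    rw [if_pos (Set.mem_insert _ _)]
    simp [vA]
  · by_cases h2 : Sum.inl j ∈ W
    · rw [if_pos (Set.mem_insert_of_mem _ (Set.mem_union_left _ h2))]
      simp [vA, h1, h2]
    · by_cases h3 : Sum.inl j ∈ Z'
      · rw [if_pos (Set.mem_insert_of_mem _ (Set.mem_union_right _ h3))]
        simp [vA, h1, h2, sol_inl]
      · rw [if_neg (by simp [h1, h2, h3, Set.mem_insert_iff])]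
        simp [vA, h1, h2]

/-- `O` cannot belong to the witness set `W` of AC2 for `O = 1`. -/
lemma AC2_O_not_mem {n t : ℕ} {u : Fin n → ℤ} {i : Fin n} {x : ℤ}
    {W : Set (Fin n ⊕ Unit)} {x' : ℤ} {w' : Fin n ⊕ Unit → ℤ}
    (h : AC2 (votingModel n t) u (Sum.inl i) x (CausalFormula.eq (Sum.inr ()) 1) W x' w') :
    Sum.inr () ∉ W := by
  obtain ⟨hXW, hx', hw', ha, hb⟩ := h
  intro hOW
  have hb0 := hb ∅ (Set.empty_subset _)
  rw [Set.union_empty] at hb0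
  have hOA : (Sum.inr () : Fin n ⊕ Unit) ∈ insert (Sum.inl i) W := Set.mem_insert_of_mem _ hOW
  rw [sat_O_mem n t u _ _ hOA] at hb0
  rw [if_neg (by simp), if_pos hOW] at hb0
  apply ha
  rw [sat_O_mem n t u _ _ hOA]
  rw [if_neg (by simp)]
  exact hb0

/-- Any AC2 witness for voter `i` requires changing at least `m - t` variables. -/
lemma AC2_lower {n t m : ℕ} (htm : t ≤ m) {u : Fin n → ℤ}
    (hcount : (Finset.univ.filter fun i => u i = 1).card = m)
    {i : Fin n} {x : ℤ} {W : Set (Fin n ⊕ Unit)} {x' : ℤ} {w' : Fin n ⊕ Unit → ℤ}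
    (h : AC2 (votingModel n t) u (Sum.inl i) x (CausalFormula.eq (Sum.inr ()) 1) W x' w') :
    m - t ≤ {Y | Y ∈ W ∧ w' Y ≠ (votingModel n t).solution u Y}.ncard := by
  have hOW := AC2_O_not_mem h
  obtain ⟨hXW, hx', hw', ha, hb⟩ := h
  rw [satA_iff n t u i W x' w' hOW] at ha
  set Q := (Finset.univ.filter fun j => u j = 1) with hQdef
  set Ca := (Finset.univ.filter fun j => vA n u i W x' w' j = 1) with hCa
  set T := (Q.erase i).filter (fun j => Sum.inl j ∈ W ∧ w' (Sum.inl j) ≠ 1) with hT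
  have hsub : Q ⊆ Ca ∪ insert i T := by
    intro j hj
    have huj : u j = 1 := by
      rw [hQdef] at hj
      exact (Finset.mem_filter.mp hj).2
    by_cases h1 : j = i
    · exact Finset.mem_union_right _ (by simp [h1])
    · by_cases h2 : Sum.inl j ∈ W
      · by_cases h3 : w' (Sum.inl j) = 1
        · apply Finset.mem_union_left
          rw [hCa]
          exact Finset.mem_filter.mpr ⟨Finset.mem_univ _, by simp [vA, h1, h2, h3]⟩
        · apply Finset.mem_union_right
          apply Finset.mem_insert_of_mem
          rw [hT]
          simp only [Finset.mem_filter, Finset.mem_erase]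
          exact ⟨⟨h1, hj⟩, h2, h3⟩
      · apply Finset.mem_union_left
        rw [hCa]
        exact Finset.mem_filter.mpr ⟨Finset.mem_univ _, by simp [vA, h1, h2, huj]⟩
  have hcard : m ≤ Ca.card + (T.card + 1) := by
    calc m = Q.card := (hQdef ▸ hcount).symm
    _ ≤ (Ca ∪ insert i T).card := Finset.card_le_card hsub
    _ ≤ Ca.card + (insert i T).card := Finset.card_union_le _ _
    _ ≤ Ca.card + (T.card + 1) := by
        gcongr
        exact Finset.card_insert_le _ _
  have hcalt : ¬ t ≤ Ca.card := ha
  have hTle : m - t ≤ T.card := by omega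
  refine le_trans hTle ?_
  have himg : (Sum.inl '' (↑T : Set (Fin n)) : Set (Fin n ⊕ Unit)) ⊆
      {Y | Y ∈ W ∧ w' Y ≠ (votingModel n t).solution u Y} := by
    rintro Y ⟨j, hj, rfl⟩
    rw [hT] at hj
    simp only [Finset.coe_filter, Set.mem_setOf_eq] at hj
    obtain ⟨hje, h2, h3⟩ := hj
    have huj : u j = 1 := by
      have := Finset.mem_of_mem_erase hje
      rw [hQdef] at this
      exact (Finset.mem_filter.mp this).2
    refine ⟨h2, ?_⟩
    rw [sol_inl, huj]
    exact h3
  calc T.card = (Sum.inl '' (↑T : Set (Fin n)) : Set (Fin n ⊕ Unit)).ncard := by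
        rw [Set.ncard_image_of_injective _ Sum.inl_injective, Set.ncard_coe_finset]
  _ ≤ _ := Set.ncard_le_ncard himg (Set.toFinite _)

theorem voting_responsibility (n m : ℕ) (hm₁ : n / 2 + 1 ≤ m) (hm₂ : m ≤ n)
    (u : Fin n → ℤ) (hvals : ∀ i, u i = 0 ∨ u i = 1)
    (hcount : (Finset.univ.filter fun i => u i = 1).card = m) :
    ∀ i : Fin n,
      (u i = 1 →
        IsCause (votingModel n (n / 2 + 1)) u (Sum.inl i) 1
            (CausalFormula.eq (Sum.inr ()) 1) ∧
        dr (votingModel n (n / 2 + 1)) u (Sum.inl i) 1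
            (CausalFormula.eq (Sum.inr ()) 1)
          = 1 / (((m - (n / 2 + 1) : ℕ) : ℚ) + 1)) ∧
      (u i = 0 →
        ¬ IsCause (votingModel n (n / 2 + 1)) u (Sum.inl i) 0
            (CausalFormula.eq (Sum.inr ()) 1) ∧
        dr (votingModel n (n / 2 + 1)) u (Sum.inl i) 0
            (CausalFormula.eq (Sum.inr ()) 1) = 0) := by
  intro i
  set t := n / 2 + 1 with ht
  have hsolO : (votingModel n t).solution u (Sum.inr ()) = 1 := sol_O u hm₁ hcount
  constructor
  · -- voter voting 1
    intro hui
    have hiQ : i ∈ (Finset.univ.filter fun j => u j = 1) := by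
      simp [hui]
    have herase : ((Finset.univ.filter fun j => u j = 1).erase i).card = m - 1 := by
      rw [Finset.card_erase_of_mem hiQ, hcount]
    obtain ⟨W₀, hW₀sub, hW₀card⟩ :=
      Finset.exists_subset_card_eq (show m - t ≤
        ((Finset.univ.filter fun j => u j = 1).erase i).card by
          rw [herase]; omega)
    have hiW₀ : i ∉ W₀ := fun h => (Finset.mem_erase.mp (hW₀sub h)).1 rfl
    have hW₀Q : ∀ j ∈ W₀, u j = 1 := fun j hj =>
      (Finset.mem_filter.mp (Finset.mem_of_mem_erase (hW₀sub hj))).2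
    have hW₀ne : ∀ j ∈ W₀, j ≠ i := fun j hj => (Finset.mem_erase.mp (hW₀sub hj)).1
    have hWmem : ∀ j, Sum.inl j ∈ (Sum.inl '' (↑W₀ : Set (Fin n)) : Set (Fin n ⊕ Unit))
        ↔ j ∈ W₀ := by intro j; simp
    have hOWset : Sum.inr () ∉ (Sum.inl '' (↑W₀ : Set (Fin n)) : Set (Fin n ⊕ Unit)) := by
      simp
    -- the sets of 1-votes after intervention
    have hins_sub : insert i W₀ ⊆ (Finset.univ.filter fun j => u j = 1) := by
      intro j hj
      rcases Finset.mem_insert.mp hj with h | h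
      · exact h ▸ hiQ
      · exact Finset.mem_of_mem_erase (hW₀sub h)
    have hins_card : (insert i W₀).card = (m - t) + 1 := by
      rw [Finset.card_insert_of_notMem hiW₀, hW₀card]
    have hsd_card : ((Finset.univ.filter fun j => u j = 1) \ insert i W₀).card
        = m - ((m - t) + 1) := by
      rw [Finset.card_sdiff_of_subset hins_sub, hins_card, hcount]
    -- AC2 for the witness (inl '' W₀, 0, const 0)
    have hAC2 : AC2 (votingModel n t) u (Sum.inl i) 1 (CausalFormula.eq (Sum.inr ()) 1)
        (Sum.inl '' (↑W₀ : Set (Fin n))) 0 (fun _ => 0) := by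
      refine ⟨?_, ?_, ?_, ?_, ?_⟩
      · intro h
        exact hiW₀ ((hWmem i).mp h)
      · show (0:ℤ) ∈ ({0, 1} : Set ℤ)
        simp
      · intro Y _
        show (0:ℤ) ∈ ({0, 1} : Set ℤ)
        simp
      · rw [satA_iff n t u i _ 0 (fun _ => 0) hOWset]
        have hfeq : (Finset.univ.filter fun j =>
              vA n u i (Sum.inl '' (↑W₀ : Set (Fin n))) 0 (fun _ => 0) j = 1)
            = (Finset.univ.filter fun j => u j = 1) \ insert i W₀ := by
          ext j
          simp only [Finset.mem_filter, Finset.mem_univ, true_and, Finset.mem_sdiff,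
            Finset.mem_insert, vA]
          by_cases h1 : j = i
          · simp [h1]
          · by_cases h2 : j ∈ W₀
            · simp [h1, h2, hWmem j]
            · simp [h1, h2, hWmem j]
        rw [hfeq, hsd_card]
        omega
      · intro Z' hZ'
        by_cases hOZ : Sum.inr () ∈ Z'
        · rw [sat_O_mem n t u _ _ (Set.mem_insert_of_mem _ (Set.mem_union_right _ hOZ))]
          rw [if_neg (by simp), if_neg hOWset]
          exact hsolO
        · rw [satB_iff n t u i _ 1 (fun _ => 0) Z' hOWset hOZ]
          have hfeq : (Finset.univ.filter fun j =>
                vA n u i (Sum.inl '' (↑W₀ : Set (Fin n))) 1 (fun _ => 0) j = 1)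
              = insert i ((Finset.univ.filter fun j => u j = 1) \ insert i W₀) := by
            ext j
            simp only [Finset.mem_filter, Finset.mem_univ, true_and, Finset.mem_sdiff,
              Finset.mem_insert, vA]
            by_cases h1 : j = i
            · simp [h1]
            · by_cases h2 : j ∈ W₀
              · simp [h1, h2, hWmem j]
              · simp [h1, h2, hWmem j]
          rw [hfeq, Finset.card_insert_of_notMem (by simp), hsd_card]
          omega
    have hcause : IsCause (votingModel n t) u (Sum.inl i) 1 (CausalFormula.eq (Sum.inr ()) 1) := by
      refine ⟨⟨?_, ?_⟩, _, _, _, hAC2⟩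
      · rw [sol_inl]; exact hui
      · exact hsolO
    refine ⟨hcause, ?_⟩
    -- the changed set of the witness is exactly inl '' W₀
    have hK : {Y | Y ∈ (Sum.inl '' (↑W₀ : Set (Fin n)) : Set (Fin n ⊕ Unit)) ∧
        (fun _ => (0:ℤ)) Y ≠ (votingModel n t).solution u Y}.ncard = m - t := by
      have hset : {Y | Y ∈ (Sum.inl '' (↑W₀ : Set (Fin n)) : Set (Fin n ⊕ Unit)) ∧
          (fun _ => (0:ℤ)) Y ≠ (votingModel n t).solution u Y}
          = (Sum.inl '' (↑W₀ : Set (Fin n)) : Set (Fin n ⊕ Unit)) := by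
        ext Y
        simp only [Set.mem_setOf_eq, and_iff_left_iff_imp]
        rintro ⟨j, hj, rfl⟩
        rw [sol_inl, hW₀Q j hj]
        norm_num
      rw [hset, Set.ncard_image_of_injective _ Sum.inl_injective,
        Set.ncard_coe_finset, hW₀card]
    have hinf : sInf {k : ℕ | ∃ W x' w',
        AC2 (votingModel n t) u (Sum.inl i) 1 (CausalFormula.eq (Sum.inr ()) 1) W x' w' ∧
        {Y | Y ∈ W ∧ w' Y ≠ (votingModel n t).solution u Y}.ncard = k} = m - t := by
      have hmem : m - t ∈ {k : ℕ | ∃ W x' w',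
          AC2 (votingModel n t) u (Sum.inl i) 1 (CausalFormula.eq (Sum.inr ()) 1) W x' w' ∧
          {Y | Y ∈ W ∧ w' Y ≠ (votingModel n t).solution u Y}.ncard = k} :=
        ⟨_, _, _, hAC2, hK⟩
      refine le_antisymm (Nat.sInf_le hmem) (le_csInf ⟨_, hmem⟩ ?_)
      rintro k ⟨W, x', w', hac, rfl⟩
      exact AC2_lower hm₁ hcount hac
    show dr (votingModel n t) u (Sum.inl i) 1 (CausalFormula.eq (Sum.inr ()) 1)
      = 1 / (((m - t : ℕ) : ℚ) + 1)
    unfold dr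
    rw [if_pos hcause, hinf]
  · -- voter voting 0
    intro hui
    have hnc : ¬ IsCause (votingModel n t) u (Sum.inl i) 0 (CausalFormula.eq (Sum.inr ()) 1) := by
      rintro ⟨-, W, x', w', hAC2w⟩
      have hOW := AC2_O_not_mem hAC2w
      obtain ⟨hXW, hx', hw', ha, hb⟩ := hAC2w
      rw [satA_iff n t u i W x' w' hOW] at ha
      have hb0 := hb ∅ (Set.empty_subset _)
      rw [satB_iff n t u i W 0 w' ∅ hOW (Set.notMem_empty _)] at hb0
      apply ha
      refine le_trans hb0 (Finset.card_le_card ?_)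
      intro j hj
      simp only [Finset.mem_filter, Finset.mem_univ, true_and] at hj ⊢
      simp only [vA] at hj ⊢
      by_cases h1 : j = i
      · exfalso
        rw [if_pos h1] at hj
        norm_num at hj
      · rw [if_neg h1] at hj ⊢
        exact hj
    refine ⟨hnc, ?_⟩
    unfold dr
    rw [if_neg hnc]
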